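/- Fix m ≥ 1 and D ≥ 1. Let W ⊆ ℝ^D be a compact subset and let U₁, …, U_N ⊆ ℝ^D be open sets whose union contains W. Then there exist semianalytic functions φ₁, …, φ_N : ℝ^D → ℝ of class C^m such that supp φ_I ⊆ U_I for every I = 1, …, N and Σ_{I=1}^N φ_I(x) = 1 for every x ∈ W. -/

import Mathlib

/-- A sign, one of `>`, `=`, `<`, used in the definition of semianalytic partitions. -/
inductive Sign : Type
  | pos : Sign
  | zero : Sign
  | neg : Sign

/-- `s.holds r` means that the real number `r` satisfies the (in)equality prescribed by the
sign `s`, i.e. `r > 0`, `r = 0` or `r < 0`. -/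
def Sign.holds : Sign → ℝ → Prop
  | .pos, r => 0 < r
  | .zero, r => r = 0
  | .neg, r => r < 0

/-- The cell `U_{h,σ}` of the (semi)analytic partition `P(U,h)` determined by the sign
assignment `σ`: the set of `x ∈ U` such that `h I x` satisfies the sign condition `σ I`
for every `I`. -/
def saCell {E : Type*} (U : Set E) {N : ℕ} (h : Fin N → E → ℝ) (σ : Fin N → Sign) : Set E :=
  {x ∈ U | ∀ I, (σ I).holds (h I x)}

/-- A function `f` defined on an open set `U` is semianalytic if every `x ∈ U` has an open
neighborhood `V ⊆ U` together with a finite family `h` of functions analytic on `V`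
(a semianalytic partition `P(V,h)`) such that on every cell of the partition, `f` coincides
with a function analytic on `V`. -/
def SemianalyticOn {E F : Type*} [NormedAddCommGroup E] [NormedSpace ℝ E]
    [NormedAddCommGroup F] [NormedSpace ℝ F] (f : E → F) (U : Set E) : Prop :=
  ∀ x ∈ U, ∃ V : Set E, IsOpen V ∧ x ∈ V ∧ V ⊆ U ∧
    ∃ (N : ℕ) (h : Fin N → E → ℝ), (∀ I, AnalyticOnNhd ℝ (h I) V) ∧
      ∀ σ : Fin N → Sign, ∃ g : E → F, AnalyticOnNhd ℝ g V ∧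
        Set.EqOn f g (saCell V h σ)

open Set Filter


noncomputable def Qf (p : ℕ) : ℝ → ℝ := fun t => max t 0 ^ (p + 1)

lemma Qf_hasDerivAt (p : ℕ) (hp : 1 ≤ p) (t : ℝ) :
    HasDerivAt (Qf p) ((p + 1) * Qf (p - 1) t) t := by
  rcases lt_trichotomy t 0 with ht | ht | ht
  · have h0 : Qf (p-1) t = 0 := by
      simp [Qf, max_eq_right ht.le]
    rw [h0, mul_zero]
    have : Qf p =ᶠ[nhds t] fun _ => 0 := by
      filter_upwards [Iio_mem_nhds ht] with s hs
      simp [Qf, max_eq_right (le_of_lt (mem_Iio.mp hs))]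
    exact (hasDerivAt_const t (0:ℝ)).congr_of_eventuallyEq this
  · subst ht
    have h0 : Qf (p-1) 0 = 0 := by simp [Qf]
    rw [h0, mul_zero]
    rw [hasDerivAt_iff_isLittleO]
    simp only [Qf, sub_zero, max_self, smul_zero, sub_zero]
    rw [Asymptotics.isLittleO_iff]
    intro c hc
    filter_upwards [Metric.ball_mem_nhds 0 (lt_min hc one_pos)] with s hs
    simp only [Real.dist_eq, sub_zero, Metric.mem_ball] at hs
    have h1 : |s| < 1 := lt_of_lt_of_le hs (min_le_right _ _)
    have h2 : |s| < c := lt_of_lt_of_le hs (min_le_left _ _)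
    have hm : |max s 0| ≤ |s| := by
      rcases le_or_gt s 0 with h | h
      · simp [max_eq_right h]
      · simp [max_eq_left h.le]
    calc ‖max s 0 ^ (p+1) - 0 ^ (p+1)‖ = |max s 0| ^ (p+1) := by
          simp [abs_pow]
      _ ≤ |s| ^ (p+1) := pow_le_pow_left₀ (abs_nonneg _) hm _
      _ ≤ |s| ^ 2 := by
          apply pow_le_pow_of_le_one (abs_nonneg _) h1.le
          omega
      _ = |s| * |s| := sq |s| ▸ by ring
      _ ≤ c * |s| := mul_le_mul_of_nonneg_right h2.le (abs_nonneg _)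
      _ = c * ‖s‖ := by rw [Real.norm_eq_abs]
  · have h0 : Qf (p-1) t = t ^ p := by
      have : p - 1 + 1 = p := by omega
      simp [Qf, max_eq_left ht.le, this]
    rw [h0]
    have hp' := hasDerivAt_pow (p+1) t
    have : HasDerivAt (fun s : ℝ => s ^ (p+1)) ((p+1 : ℝ) * t ^ p) t := by simpa using hp'
    exact this.congr_of_eventuallyEq (by filter_upwards [Ioi_mem_nhds ht] with s hs; simp [Qf, max_eq_left (le_of_lt (mem_Ioi.mp hs))])

lemma Qf_contDiff (p : ℕ) : ContDiff ℝ (p : WithTop ℕ∞) (Qf p) := by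
  induction p with
  | zero =>
      rw [show ((0:ℕ) : WithTop ℕ∞) = 0 from rfl, contDiff_zero]
      exact (continuous_id.max continuous_const).pow _
  | succ k ih =>
      have hd : ∀ t, HasDerivAt (Qf (k+1)) ((↑k + 1 + 1) * Qf k t) t := by
        intro t
        have := Qf_hasDerivAt (k+1) (by omega) t
        have e : ((k:ℝ)+1+1) = ((k+1:ℕ):ℝ)+1 := by push_cast; ring
        rw [e]
        simpa [Nat.add_sub_cancel] using this
      have hcast : ((k+1 : ℕ) : WithTop ℕ∞) = (k : WithTop ℕ∞) + 1 := by push_cast; ring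
      rw [hcast, contDiff_succ_iff_deriv]
      refine ⟨fun t => (hd t).differentiableAt, by simp, ?_⟩
      have : deriv (Qf (k+1)) = fun t => ((k:ℝ) + 1 + 1) * Qf k t := by
        ext t; exact (hd t).deriv
      rw [this]
      exact contDiff_const.mul ih


section GSA
variable {E : Type*} [NormedAddCommGroup E] [NormedSpace ℝ E]

/-- Globally presented semianalytic function. -/
def GSA (f : E → ℝ) : Prop :=
  ∃ (N : ℕ) (h : Fin N → E → ℝ), (∀ I, AnalyticOnNhd ℝ (h I) Set.univ) ∧
    ∀ σ : Fin N → Sign, ∃ g : E → ℝ, AnalyticOnNhd ℝ g Set.univ ∧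
      Set.EqOn f g (saCell Set.univ h σ)

lemma GSA.semianalyticOn {f : E → ℝ} (hf : GSA f) : SemianalyticOn f Set.univ := by
  intro x _
  obtain ⟨N, h, hh, hg⟩ := hf
  exact ⟨Set.univ, isOpen_univ, Set.mem_univ x, subset_rfl, N, h, hh, hg⟩

lemma gsa_of_analytic {f : E → ℝ} (hf : AnalyticOnNhd ℝ f Set.univ) : GSA f :=
  ⟨0, Fin.elim0, fun I => I.elim0, fun _σ => ⟨f, hf, fun _x _ => rfl⟩⟩

lemma gsa_const (c : ℝ) : GSA (fun _ : E => c) := gsa_of_analytic analyticOnNhd_const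

lemma saCell_append_left {N₁ N₂ : ℕ} (h₁ : Fin N₁ → E → ℝ) (h₂ : Fin N₂ → E → ℝ)
    (σ : Fin (N₁ + N₂) → Sign) {x : E}
    (hx : x ∈ saCell Set.univ (Fin.append h₁ h₂) σ) :
    x ∈ saCell Set.univ h₁ (σ ∘ Fin.castAdd N₂) := by
  refine ⟨Set.mem_univ x, fun I => ?_⟩
  have := hx.2 (Fin.castAdd N₂ I)
  rwa [Fin.append_left] at this

lemma saCell_append_right {N₁ N₂ : ℕ} (h₁ : Fin N₁ → E → ℝ) (h₂ : Fin N₂ → E → ℝ)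
    (σ : Fin (N₁ + N₂) → Sign) {x : E}
    (hx : x ∈ saCell Set.univ (Fin.append h₁ h₂) σ) :
    x ∈ saCell Set.univ h₂ (σ ∘ Fin.natAdd N₁) := by
  refine ⟨Set.mem_univ x, fun I => ?_⟩
  have := hx.2 (Fin.natAdd N₁ I)
  rwa [Fin.append_right] at this

lemma GSA.comb {f₁ f₂ : E → ℝ} (k : ℝ → ℝ → ℝ)
    (hk : ∀ (a b : E → ℝ), AnalyticOnNhd ℝ a Set.univ → AnalyticOnNhd ℝ b Set.univ →
      AnalyticOnNhd ℝ (fun x => k (a x) (b x)) Set.univ)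
    (h₁ : GSA f₁) (h₂ : GSA f₂) : GSA (fun x => k (f₁ x) (f₂ x)) := by
  obtain ⟨N₁, u₁, hu₁, hg₁⟩ := h₁
  obtain ⟨N₂, u₂, hu₂, hg₂⟩ := h₂
  refine ⟨N₁ + N₂, Fin.append u₁ u₂, ?_, ?_⟩
  · intro I
    refine Fin.addCases (fun i => ?_) (fun i => ?_) I
    · rw [Fin.append_left]; exact hu₁ i
    · rw [Fin.append_right]; exact hu₂ i
  · intro σ
    obtain ⟨g₁, hga₁, hge₁⟩ := hg₁ (σ ∘ Fin.castAdd N₂)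
    obtain ⟨g₂, hga₂, hge₂⟩ := hg₂ (σ ∘ Fin.natAdd N₁)
    refine ⟨fun x => k (g₁ x) (g₂ x), hk _ _ hga₁ hga₂, fun x hx => ?_⟩
    simp only []
    rw [hge₁ (saCell_append_left u₁ u₂ σ hx), hge₂ (saCell_append_right u₁ u₂ σ hx)]

lemma GSA.add {f₁ f₂ : E → ℝ} (h₁ : GSA f₁) (h₂ : GSA f₂) : GSA (fun x => f₁ x + f₂ x) :=
  GSA.comb (· + ·) (fun _ _ ha hb => ha.add hb) h₁ h₂

lemma GSA.mul {f₁ f₂ : E → ℝ} (h₁ : GSA f₁) (h₂ : GSA f₂) : GSA (fun x => f₁ x * f₂ x) :=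
  GSA.comb (· * ·) (fun _ _ ha hb => ha.mul hb) h₁ h₂

lemma GSA.sub {f₁ f₂ : E → ℝ} (h₁ : GSA f₁) (h₂ : GSA f₂) : GSA (fun x => f₁ x - f₂ x) :=
  GSA.comb (· - ·) (fun _ _ ha hb => ha.sub hb) h₁ h₂

lemma gsa_sum {ι : Type*} (s : Finset ι) (f : ι → E → ℝ) (h : ∀ i ∈ s, GSA (f i)) :
    GSA (fun x => ∑ i ∈ s, f i x) := by
  classical
  induction s using Finset.cons_induction with
  | empty => simpa using gsa_const 0
  | cons a s ha ih =>
      simp only [Finset.sum_cons]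
      exact (h a (Finset.mem_cons_self a s)).add
        (ih (fun i hi => h i (Finset.mem_cons_of_mem hi)))

lemma gsa_prod {ι : Type*} (s : Finset ι) (f : ι → E → ℝ) (h : ∀ i ∈ s, GSA (f i)) :
    GSA (fun x => ∏ i ∈ s, f i x) := by
  classical
  induction s using Finset.cons_induction with
  | empty => simpa using gsa_const 1
  | cons a s ha ih =>
      simp only [Finset.prod_cons]
      exact (h a (Finset.mem_cons_self a s)).mul
        (ih (fun i hi => h i (Finset.mem_cons_of_mem hi)))

end GSA

def signEquiv : Sign ≃ Fin 3 where
  toFun s := match s with | .pos => 0 | .zero => 1 | .neg => 2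
  invFun i := match i with | 0 => .pos | 1 => .zero | _ => .neg
  left_inv s := by cases s <;> rfl
  right_inv i := by fin_cases i <;> rfl

noncomputable instance : Fintype Sign := Fintype.ofEquiv (Fin 3) signEquiv.symm

section Qcomp
variable {E : Type*} [NormedAddCommGroup E] [NormedSpace ℝ E]

lemma GSA.qcomp {f : E → ℝ} (p : ℕ) (hf : GSA f) : GSA (fun x => Qf p (f x)) := by
  classical
  obtain ⟨N, u, hu, hg⟩ := hf
  choose G hGa hGe using hg
  let e := Fintype.equivFin (Fin N → Sign)
  set M := Fintype.card (Fin N → Sign) with hM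
  refine ⟨N + M, Fin.append u (fun k => G (e.symm k)), ?_, ?_⟩
  · intro I
    refine Fin.addCases (fun i => ?_) (fun i => ?_) I
    · rw [Fin.append_left]; exact hu i
    · rw [Fin.append_right]; exact hGa _
  · intro σ'
    set σ : Fin N → Sign := σ' ∘ Fin.castAdd M with hσ
    have key : ∀ x ∈ saCell Set.univ (Fin.append u (fun k => G (e.symm k))) σ',
        f x = G σ x ∧ (σ' (Fin.natAdd N (e σ))).holds (G σ x) := by
      intro x hx
      constructor
      · exact hGe σ (saCell_append_left _ _ σ' hx)
      · have := hx.2 (Fin.natAdd N (e σ))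
        rwa [Fin.append_right, Equiv.symm_apply_apply] at this
    cases hτ : σ' (Fin.natAdd N (e σ)) with
    | pos =>
        refine ⟨fun x => G σ x ^ (p + 1), (hGa σ).pow (p+1), fun x hx => ?_⟩
        obtain ⟨hfx, hs⟩ := key x hx
        rw [hτ] at hs
        simp only [Qf, hfx]
        rw [max_eq_left hs.le]
    | zero =>
        refine ⟨fun _ => 0, analyticOnNhd_const, fun x hx => ?_⟩
        obtain ⟨hfx, hs⟩ := key x hx
        rw [hτ] at hs
        simp only [Sign.holds] at hs
        simp only [Qf, hfx, hs]
        simp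
    | neg =>
        refine ⟨fun _ => 0, analyticOnNhd_const, fun x hx => ?_⟩
        obtain ⟨hfx, hs⟩ := key x hx
        rw [hτ] at hs
        simp only [Qf, hfx]
        rw [max_eq_right hs.le]
        simp

end Qcomp

lemma contDiff_finset_prod {E : Type*} [NormedAddCommGroup E] [NormedSpace ℝ E]
    {ι : Type*} (s : Finset ι) (f : ι → E → ℝ) {n : WithTop ℕ∞}
    (h : ∀ i ∈ s, ContDiff ℝ n (f i)) :
    ContDiff ℝ n (fun x => ∏ i ∈ s, f i x) := by
  classical
  induction s using Finset.cons_induction with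
  | empty => simpa using contDiff_const
  | cons a s ha ih =>
      simp only [Finset.prod_cons]
      exact (h a (Finset.mem_cons_self a s)).mul
        (ih (fun i hi => h i (Finset.mem_cons_of_mem hi)))

lemma contDiff_finset_sum {E : Type*} [NormedAddCommGroup E] [NormedSpace ℝ E]
    {ι : Type*} (s : Finset ι) (f : ι → E → ℝ) {n : WithTop ℕ∞}
    (h : ∀ i ∈ s, ContDiff ℝ n (f i)) :
    ContDiff ℝ n (fun x => ∑ i ∈ s, f i x) := by
  classical
  induction s using Finset.cons_induction with
  | empty => simpa using contDiff_const
  | cons a s ha ih =>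
      simp only [Finset.sum_cons]
      exact (h a (Finset.mem_cons_self a s)).add
        (ih (fun i hi => h i (Finset.mem_cons_of_mem hi)))

/-- Telescoping identity. -/
lemma telescope_prod (F : ℕ → ℝ) (n : ℕ) :
    ∑ i ∈ Finset.range n, F i * ∏ j ∈ Finset.range i, (1 - F j)
      = 1 - ∏ i ∈ Finset.range n, (1 - F i) := by
  induction n with
  | zero => simp
  | succ k ih =>
      rw [Finset.sum_range_succ, Finset.prod_range_succ, ih]
      ring

lemma Qf_nonneg (p : ℕ) (t : ℝ) : 0 ≤ Qf p t := pow_nonneg (le_max_right _ _) _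

lemma Qf_eq_zero_of_nonpos (p : ℕ) {t : ℝ} (ht : t ≤ 0) : Qf p t = 0 := by
  simp [Qf, max_eq_right ht]

lemma Qf_one (p : ℕ) : Qf p 1 = 1 := by simp [Qf]

lemma Qf_ge_one (p : ℕ) {t : ℝ} (ht : 1 ≤ t) : 1 ≤ Qf p t := by
  have h1 : (1:ℝ) ≤ max t 0 := le_trans ht (le_max_left _ _)
  calc (1:ℝ) = 1 ^ (p+1) := (one_pow _).symm
    _ ≤ max t 0 ^ (p+1) := pow_le_pow_left₀ zero_le_one h1 _

/-- Assembling a partition of unity from bump functions `f I` with `f I = 1` somewhere. -/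
lemma partition_from_bumps {E : Type*} [NormedAddCommGroup E] [NormedSpace ℝ E]
    (n : WithTop ℕ∞) (N : ℕ) (f : Fin N → E → ℝ)
    (hgsa : ∀ I, GSA (f I)) (hcd : ∀ I, ContDiff ℝ n (f I))
    (W : Set E) (U : Fin N → Set E) (hsupp : ∀ I, tsupport (f I) ⊆ U I)
    (hone : ∀ x ∈ W, ∃ I, f I x = 1) :
    ∃ φ : Fin N → E → ℝ,
      (∀ I, SemianalyticOn (φ I) Set.univ ∧ ContDiff ℝ n (φ I) ∧
        tsupport (φ I) ⊆ U I) ∧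
      ∀ x ∈ W, ∑ I, φ I x = 1 := by
  classical
  set F : ℕ → E → ℝ := fun j x => if h : j < N then f ⟨j, h⟩ x else 0 with hF
  have hFgsa : ∀ j, GSA (F j) := by
    intro j
    by_cases h : j < N
    · simp only [hF, dif_pos h]; exact hgsa ⟨j, h⟩
    · simp only [hF, dif_neg h]; exact gsa_const 0
  have hFcd : ∀ j, ContDiff ℝ n (F j) := by
    intro j
    by_cases h : j < N
    · simp only [hF, dif_pos h]; exact hcd ⟨j, h⟩
    · simp only [hF, dif_neg h]; exact contDiff_const
  refine ⟨fun I x => f I x * ∏ j ∈ Finset.range I.1, (1 - F j x), fun I => ⟨?_, ?_, ?_⟩, ?_⟩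
  · exact ((hgsa I).mul (gsa_prod _ _ fun j _ => (gsa_const 1).sub (hFgsa j))).semianalyticOn
  · exact (hcd I).mul (contDiff_finset_prod _ _ fun j _ =>
      contDiff_const.sub (hFcd j))
  · refine subset_trans (closure_mono ?_) (hsupp I)
    exact Function.support_mul_subset_left _ _
  · intro x hx
    have hφ : ∀ I : Fin N, f I x * ∏ j ∈ Finset.range I.1, (1 - F j x)
        = F I.1 x * ∏ j ∈ Finset.range I.1, (1 - F j x) := by
      intro I
      congr 1
      simp only [hF, dif_pos I.2]
    calc ∑ I : Fin N, f I x * ∏ j ∈ Finset.range I.1, (1 - F j x)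
        = ∑ I : Fin N, F I.1 x * ∏ j ∈ Finset.range I.1, (1 - F j x) := by
          exact Finset.sum_congr rfl fun I _ => hφ I
      _ = ∑ i ∈ Finset.range N, F i x * ∏ j ∈ Finset.range i, (1 - F j x) :=
          Fin.sum_univ_eq_sum_range (fun i => F i x * ∏ j ∈ Finset.range i, (1 - F j x)) N
      _ = 1 - ∏ i ∈ Finset.range N, (1 - F i x) := telescope_prod (fun j => F j x) N
      _ = 1 := by
          obtain ⟨I, hI⟩ := hone x hx
          rw [Finset.prod_eq_zero (Finset.mem_range.mpr I.2) (i := I.1), sub_zero]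
          simp only [hF, dif_pos I.2]
          rw [Fin.eta, hI, sub_self]


/-- **Proposition A.7 (semianalytic partition of unity).** Let `W ⊆ ℝ^D` be compact and
let `U₁, …, U_N` be open sets covering `W`.  Then there are `C^m` semianalytic functions
`φ_I : ℝ^D → ℝ` with `supp φ_I ⊆ U_I` and `∑ I, φ_I = 1` on `W`. -/
theorem uniqLQG.semianalytic_partition_of_unity (m D N : ℕ) (hm : 1 ≤ m) (hD : 1 ≤ D)
    (W : Set (Fin D → ℝ)) (hW : IsCompact W)
    (U : Fin N → Set (Fin D → ℝ)) (hUopen : ∀ I, IsOpen (U I))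
    (hcover : W ⊆ ⋃ I, U I) :
    ∃ φ : Fin N → (Fin D → ℝ) → ℝ,
      (∀ I, SemianalyticOn (φ I) Set.univ ∧ ContDiff ℝ m (φ I) ∧
        tsupport (φ I) ⊆ U I) ∧
      ∀ x ∈ W, ∑ I, φ I x = 1 := by
  classical
  rcases W.eq_empty_or_nonempty with hWe | hWne
  · refine ⟨fun _ _ => 0, fun I => ⟨(gsa_const 0).semianalyticOn, contDiff_const, ?_⟩, ?_⟩
    · have : tsupport (fun _ : Fin D → ℝ => (0:ℝ)) = ∅ := by
        simp [tsupport, Function.support]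
      rw [this]; exact Set.empty_subset _
    · intro x hx; rw [hWe] at hx; exact absurd hx (Set.notMem_empty x)
  -- N > 0
  have hWne' := hWne
  obtain ⟨w₀, hw₀⟩ := hWne'
  obtain ⟨I₀, -⟩ := Set.mem_iUnion.mp (hcover hw₀)
  have hN : 0 < N := I₀.pos
  -- choose a ball around each point of W
  have hex : ∀ w : W, ∃ I, (w : Fin D → ℝ) ∈ U I := fun w => Set.mem_iUnion.mp (hcover w.2)
  choose Iw hIw using hex
  have hex2 : ∀ w : W, ∃ δ > 0, Metric.ball (w : Fin D → ℝ) δ ⊆ U (Iw w) :=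
    fun w => Metric.isOpen_iff.mp (hUopen (Iw w)) _ (hIw w)
  choose δ hδpos hδball using hex2
  -- polynomial bump data
  set g : W → (Fin D → ℝ) → ℝ :=
    fun w x => (δ w / 2) ^ 2 - ∑ i, (x i - (w : Fin D → ℝ) i) ^ 2 with hg
  have hganal : ∀ w, AnalyticOnNhd ℝ (g w) Set.univ := by
    intro w
    apply analyticOnNhd_const.sub
    apply Finset.analyticOnNhd_fun_sum
    intro i _
    exact (((ContinuousLinearMap.proj (R := ℝ) (φ := fun _ : Fin D => ℝ) i).analyticOnNhd
      Set.univ).sub analyticOnNhd_const).pow 2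
  have hgcd : ∀ w, ContDiff ℝ (m : WithTop ℕ∞) (g w) := by
    intro w
    apply contDiff_const.sub
    apply contDiff_finset_sum
    intro i _
    exact ((ContinuousLinearMap.proj (R := ℝ) (φ := fun _ : Fin D => ℝ) i).contDiff.sub
      contDiff_const).pow 2
  set ψ : W → (Fin D → ℝ) → ℝ := fun w x => Qf m (g w x) with hψ
  have hψcd : ∀ w, ContDiff ℝ (m : WithTop ℕ∞) (ψ w) := fun w => (Qf_contDiff m).comp (hgcd w)
  have hψgsa : ∀ w, GSA (ψ w) := fun w => GSA.qcomp m (gsa_of_analytic (hganal w))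
  have hψnonneg : ∀ w x, 0 ≤ ψ w x := fun w x => Qf_nonneg m _
  have hψpos : ∀ w x, 0 < g w x → 0 < ψ w x := by
    intro w x hgx
    exact pow_pos (lt_max_iff.mpr (Or.inl hgx)) _
  have hψsupp : ∀ w x, ψ w x ≠ 0 → 0 < g w x := by
    intro w x hne
    by_contra hle
    exact hne (Qf_eq_zero_of_nonpos m (not_lt.mp hle))
  -- finite subcover by the open sets {g w > 0}
  have hEBopen : ∀ w : W, IsOpen {x | 0 < g w x} :=
    fun w => isOpen_lt continuous_const (hgcd w).continuous
  have hEBcover : W ⊆ ⋃ w : W, {x | 0 < g w x} := by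
    intro x hx
    refine Set.mem_iUnion.mpr ⟨⟨x, hx⟩, ?_⟩
    have : ∑ i, ((x i - x i) ^ 2) = 0 := by simp
    simp only [hg, Set.mem_setOf_eq]
    rw [this, sub_zero]
    exact pow_pos (half_pos (hδpos _)) 2
  obtain ⟨t, ht⟩ := hW.elim_finite_subcover (fun w : W => {x | 0 < g w x}) hEBopen hEBcover
  -- the sums
  set S : Fin N → (Fin D → ℝ) → ℝ :=
    fun I x => ∑ w ∈ t.filter (fun w => Iw w = I), ψ w x with hS
  have hScd : ∀ I, ContDiff ℝ (m : WithTop ℕ∞) (S I) :=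
    fun I => contDiff_finset_sum _ _ fun w _ => hψcd w
  have hSgsa : ∀ I, GSA (S I) := fun I => gsa_sum _ _ fun w _ => hψgsa w
  have hSnonneg : ∀ I x, 0 ≤ S I x :=
    fun I x => Finset.sum_nonneg fun w _ => hψnonneg w x
  set T : (Fin D → ℝ) → ℝ := fun x => ∑ w ∈ t, ψ w x with hT
  have hTsum : ∀ x, ∑ I, S I x = T x :=
    fun x => Finset.sum_fiberwise t Iw (fun w => ψ w x)
  have hTpos : ∀ x ∈ W, 0 < T x := by
    intro x hx
    obtain ⟨w, hwt, hwx⟩ := Set.mem_iUnion₂.mp (ht hx)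
    exact Finset.sum_pos' (fun w' _ => hψnonneg w' x) ⟨w, hwt, hψpos w x hwx⟩
  have hTcont : Continuous T := (contDiff_finset_sum t (fun w => ψ w)
    (fun w _ => hψcd w)).continuous
  obtain ⟨x₀, hx₀W, hx₀min⟩ := hW.exists_isMinOn hWne hTcont.continuousOn
  set ε : ℝ := T x₀ / N with hε
  have hε₀pos : 0 < T x₀ := hTpos x₀ hx₀W
  have hεpos : 0 < ε := div_pos hε₀pos (by exact_mod_cast hN)
  have hSge : ∀ x ∈ W, ∃ I, ε ≤ S I x := by
    intro x hx
    by_contra hcon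
    push_neg at hcon
    have hlt : ∑ I, S I x < ∑ _I : Fin N, ε :=
      Finset.sum_lt_sum_of_nonempty (Finset.univ_nonempty_iff.mpr ⟨⟨0, hN⟩⟩)
        (fun I _ => hcon I)
    rw [hTsum] at hlt
    have hcard : ∑ _I : Fin N, ε = N * ε := by
      rw [Finset.sum_const, Finset.card_univ, Fintype.card_fin, nsmul_eq_mul]
    rw [hcard, hε] at hlt
    rw [mul_div_cancel₀ _ (by exact_mod_cast hN.ne' : (N:ℝ) ≠ 0)] at hlt
    exact absurd (hx₀min hx) (not_le.mpr hlt)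
  -- the bump functions
  set f : Fin N → (Fin D → ℝ) → ℝ :=
    fun I x => 1 - Qf m (1 - Qf m (ε⁻¹ * S I x)) with hf
  have hfgsa : ∀ I, GSA (f I) := by
    intro I
    exact (gsa_const 1).sub (((gsa_const 1).sub
      (((gsa_const ε⁻¹).mul (hSgsa I)).qcomp m)).qcomp m)
  have hfcd : ∀ I, ContDiff ℝ (m : WithTop ℕ∞) (f I) := by
    intro I
    exact contDiff_const.sub ((Qf_contDiff m).comp (contDiff_const.sub
      ((Qf_contDiff m).comp (contDiff_const.mul (hScd I)))))
  have hfone : ∀ x ∈ W, ∃ I, f I x = 1 := by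
    intro x hx
    obtain ⟨I, hI⟩ := hSge x hx
    refine ⟨I, ?_⟩
    have h1 : 1 ≤ ε⁻¹ * S I x :=
      calc (1:ℝ) = ε⁻¹ * ε := (inv_mul_cancel₀ hεpos.ne').symm
        _ ≤ ε⁻¹ * S I x := mul_le_mul_of_nonneg_left hI (inv_nonneg.mpr hεpos.le)
    have h2 : 1 ≤ Qf m (ε⁻¹ * S I x) := Qf_ge_one m h1
    have h3 : Qf m (1 - Qf m (ε⁻¹ * S I x)) = 0 :=
      Qf_eq_zero_of_nonpos m (by linarith)
    simp only [hf, h3, sub_zero]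
  have hfsupp : ∀ I x, f I x ≠ 0 → 0 < S I x := by
    intro I x hne
    by_contra hle
    push_neg at hle
    have hS0 : S I x = 0 := le_antisymm hle (hSnonneg I x)
    apply hne
    simp only [hf, hS0, mul_zero]
    rw [Qf_eq_zero_of_nonpos m le_rfl, sub_zero, Qf_one, sub_self]
  -- supports
  have htsupp : ∀ I, tsupport (f I) ⊆ U I := by
    intro I
    set K : Set (Fin D → ℝ) :=
      ⋃ w ∈ t.filter (fun w => Iw w = I), {x | 0 ≤ g w x} with hK
    have hKclosed : IsClosed K := by
      apply Set.Finite.isClosed_biUnion (Finset.finite_toSet _)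
      intro w _
      exact isClosed_le continuous_const (hgcd w).continuous
    have hsub : Function.support (f I) ⊆ K := by
      intro x hx
      have hSpos := hfsupp I x hx
      have : ∃ w ∈ t.filter (fun w => Iw w = I), 0 < ψ w x := by
        by_contra hcon
        push_neg at hcon
        have : S I x = 0 := Finset.sum_eq_zero fun w hw =>
          le_antisymm (hcon w hw) (hψnonneg w x)
        rw [this] at hSpos
        exact lt_irrefl 0 hSpos
      obtain ⟨w, hw, hψw⟩ := this
      exact Set.mem_biUnion hw (le_of_lt (hψsupp w x hψw.ne'))
    have hKU : K ⊆ U I := by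
      intro x hx
      obtain ⟨w, hw, hgx⟩ := Set.mem_iUnion₂.mp hx
      have hIww : Iw w = I := (Finset.mem_filter.mp hw).2
      have hsum : ∑ i, (x i - (w : Fin D → ℝ) i) ^ 2 ≤ (δ w / 2) ^ 2 := by
        have := Set.mem_setOf_eq ▸ hgx
        simp only [hg] at this
        linarith
      have hdist : dist x (w : Fin D → ℝ) ≤ δ w / 2 := by
        rw [dist_pi_le_iff (half_pos (hδpos w)).le]
        intro i
        have h1 : (x i - (w : Fin D → ℝ) i) ^ 2 ≤ (δ w / 2) ^ 2 :=
          le_trans (Finset.single_le_sum (f := fun j => (x j - (w : Fin D → ℝ) j) ^ 2) (fun j _ => sq_nonneg _) (Finset.mem_univ i)) hsum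
        rw [Real.dist_eq]
        calc |x i - (w : Fin D → ℝ) i| = Real.sqrt ((x i - (w : Fin D → ℝ) i) ^ 2) :=
              (Real.sqrt_sq_eq_abs _).symm
          _ ≤ Real.sqrt ((δ w / 2) ^ 2) := Real.sqrt_le_sqrt h1
          _ = δ w / 2 := Real.sqrt_sq (half_pos (hδpos w)).le
      have : x ∈ Metric.ball (w : Fin D → ℝ) (δ w) :=
        Metric.mem_ball.mpr (lt_of_le_of_lt hdist (half_lt_self (hδpos w)))
      rw [← hIww]
      exact hδball w this
    exact subset_trans (closure_minimal hsub hKclosed) hKU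
  obtain ⟨φ, hφ, hφsum⟩ := partition_from_bumps (m : WithTop ℕ∞) N f hfgsa hfcd W U htsupp hfone
  exact ⟨φ, hφ, hφsum⟩
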